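/- arXiv:1704.02907 — 4 statements merged into one kernel-verified Lean document; each statement's English description precedes it below -/
import Mathlib

section
/- Let a > 0, b > 0, μ > 0 and define x* = (1/(2b)) · max{0, √(a² + (4/ln 2)·a·b·μ) − a − 2}. If μ > ln 2 · (1+a)/(a·b), then x* > 0 and (1/ln 2) · (a/b) / ((x* + 1/b)(x* + (a+1)/b)) = 1/μ. -/
/-- the water-filling candidate x* is positive and satisfies the
stationarity equation h(x*) = 1/μ when μ > ln 2·(1+a)/(ab). -/
theorem stmt2 (a b μ : ℝ) (ha : 0 < a) (hb : 0 < b) (hμ : 0 < μ)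
    (hμbig : Real.log 2 * (1 + a) / (a * b) < μ)
    (x : ℝ)
    (hx : x = (1 / (2 * b)) * max 0 (Real.sqrt (a ^ 2 + (4 / Real.log 2) * a * b * μ) - a - 2)) :
    0 < x ∧
    (1 / Real.log 2) * (a / b) / ((x + 1 / b) * (x + (a + 1) / b)) = 1 / μ := by
  have hL : 0 < Real.log 2 := Real.log_pos (by norm_num)
  have hmul : Real.log 2 * (1 + a) < μ * (a * b) :=
    (div_lt_iff₀ (by positivity)).mp hμbig
  have hkey : (a + 2) ^ 2 < a ^ 2 + (4 / Real.log 2) * a * b * μ := by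
    have h4 : 4 * (1 + a) < (4 / Real.log 2) * a * b * μ := by
      rw [div_mul_eq_mul_div, div_mul_eq_mul_div, div_mul_eq_mul_div, lt_div_iff₀ hL]
      nlinarith
    nlinarith
  set D := a ^ 2 + (4 / Real.log 2) * a * b * μ with hD
  have hDnn : 0 ≤ D := le_trans (by positivity) hkey.le
  set s := Real.sqrt D with hsdef
  have hs2 : s ^ 2 = D := Real.sq_sqrt hDnn
  have hslt : a + 2 < s := by
    nlinarith [Real.sqrt_nonneg D, hs2]
  have hmax : max 0 (s - a - 2) = s - a - 2 := max_eq_right (by linarith)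
  have hxval : x = (s - a - 2) / (2 * b) := by
    rw [hx, hmax]; ring
  have hxpos : 0 < x := by
    rw [hxval]; apply div_pos <;> linarith
  refine ⟨hxpos, ?_⟩
  have hprod : (x + 1 / b) * (x + (a + 1) / b) = a * μ / (Real.log 2 * b) := by
    have hE : Real.log 2 * (s ^ 2 - a ^ 2) = 4 * a * b * μ := by
      rw [hs2, hD]; field_simp; ring
    rw [hxval]
    field_simp
    linear_combination hE
  rw [hprod]
  field_simp
end

section
/- Let D ≥ 1, let a_k, b_k > 0 for k = 1,…,D, let E > 0, and for μ > 0 let x_k(μ) = (1/(2b_k)) max{0, √(a_k² + (4/ln2)a_k b_k μ) − a_k − 2}. Define l(μ) = −(1/2)Σ_k log₂[(1+a_k)(1+b_k x_k(μ))/(1+a_k+b_k x_k(μ))] + (1/μ)[E + (1/2)Σ_k x_k(μ)]. Then l is continuous, l(μ) > 0 for μ ≤ min_k ln2·(1+a_k)/(a_k b_k), l(μ) → −(1/2)Σ_k log₂(1+a_k) < 0 as μ → ∞, and there exists μ* ∈ (min_k ln2·(1+a_k)/(a_k b_k), ∞) with l(μ*) = 0. -/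
open Filter

private lemma sqrtTendstoAtTop : Tendsto Real.sqrt atTop atTop := by
  rw [tendsto_atTop_atTop]
  intro C
  refine ⟨max (C ^ 2) 0, fun x hx => ?_⟩
  rcases le_or_gt C 0 with h | h
  · exact h.trans (Real.sqrt_nonneg x)
  · have h1 : C ^ 2 ≤ x := le_trans (le_max_left _ _) hx
    have h2 := Real.sqrt_le_sqrt h1
    rwa [Real.sqrt_sq h.le] at h2

private lemma sqrtAddLe {x y : ℝ} (hx : 0 ≤ x) (hy : 0 ≤ y) :
    Real.sqrt (x + y) ≤ Real.sqrt x + Real.sqrt y := by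
  have h1 : x + y ≤ (Real.sqrt x + Real.sqrt y) ^ 2 := by
    have hxx := Real.sq_sqrt hx
    have hyy := Real.sq_sqrt hy
    have h := mul_nonneg (Real.sqrt_nonneg x) (Real.sqrt_nonneg y)
    nlinarith
  have h2 := Real.sqrt_le_sqrt h1
  rwa [Real.sqrt_sq (by positivity)] at h2

private lemma sqrtDivTendsto : Tendsto (fun μ : ℝ => Real.sqrt μ / μ) atTop (nhds 0) := by
  have h1 : Tendsto (fun μ : ℝ => (Real.sqrt μ)⁻¹) atTop (nhds 0) :=
    sqrtTendstoAtTop.inv_tendsto_atTop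
  apply h1.congr'
  filter_upwards [eventually_gt_atTop (0:ℝ)] with μ hμ
  have hs : (0:ℝ) < Real.sqrt μ := Real.sqrt_pos.mpr hμ
  field_simp
  rw [Real.sq_sqrt hμ.le]

private lemma xtLemma (A B C : ℝ) (hB : 0 < B) (hC : 0 < C) :
    Tendsto (fun μ : ℝ => (1 / (2 * B)) * max 0 (Real.sqrt (A ^ 2 + C * μ) - A - 2))
      atTop atTop := by
  have h1 : Tendsto (fun μ : ℝ => A ^ 2 + C * μ) atTop atTop :=
    tendsto_atTop_add_const_left _ _ (Tendsto.const_mul_atTop hC tendsto_id)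
  have h2 : Tendsto (fun μ : ℝ => Real.sqrt (A ^ 2 + C * μ)) atTop atTop :=
    sqrtTendstoAtTop.comp h1
  have h3 : Tendsto (fun μ : ℝ => Real.sqrt (A ^ 2 + C * μ) - A - 2) atTop atTop := by
    have := tendsto_atTop_add_const_right atTop (-A - 2) h2
    exact this.congr (fun μ => by ring)
  have h4 : Tendsto (fun μ : ℝ => max 0 (Real.sqrt (A ^ 2 + C * μ) - A - 2)) atTop atTop :=
    tendsto_atTop_mono (fun μ => le_max_right _ _) h3
  have h5 : (0:ℝ) < 1 / (2 * B) := by positivity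
  exact Tendsto.const_mul_atTop h5 h4

private lemma xdivLemma (A B C : ℝ) (hA : 0 < A) (hB : 0 < B) (hC : 0 < C) :
    Tendsto (fun μ : ℝ => (1 / (2 * B)) * max 0 (Real.sqrt (A ^ 2 + C * μ) - A - 2) / μ)
      atTop (nhds 0) := by
  have hU : Tendsto (fun μ : ℝ =>
      (1 / (2 * B)) * (A / μ + Real.sqrt C * (Real.sqrt μ / μ))) atTop (nhds 0) := by
    have h1 : Tendsto (fun μ : ℝ => A / μ) atTop (nhds 0) :=
      Tendsto.div_atTop tendsto_const_nhds tendsto_id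
    have h2 := (h1.add (sqrtDivTendsto.const_mul (Real.sqrt C))).const_mul (1 / (2 * B))
    simpa using h2
  apply tendsto_of_tendsto_of_tendsto_of_le_of_le' tendsto_const_nhds hU
  · filter_upwards [eventually_gt_atTop (0:ℝ)] with μ hμ
    exact div_nonneg (mul_nonneg (by positivity) (le_max_left _ _)) hμ.le
  · filter_upwards [eventually_gt_atTop (0:ℝ)] with μ hμ
    have hsle : Real.sqrt (A ^ 2 + C * μ) ≤ A + Real.sqrt C * Real.sqrt μ := by
      have h3 : Real.sqrt (A ^ 2 + C * μ) ≤ Real.sqrt (A ^ 2) + Real.sqrt (C * μ) :=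
        sqrtAddLe (sq_nonneg A) (mul_nonneg hC.le hμ.le)
      rwa [Real.sqrt_sq hA.le, Real.sqrt_mul hC.le] at h3
    have hxle : (1 / (2 * B)) * max 0 (Real.sqrt (A ^ 2 + C * μ) - A - 2) ≤
        (1 / (2 * B)) * (A + Real.sqrt C * Real.sqrt μ) := by
      apply mul_le_mul_of_nonneg_left _ (by positivity : (0:ℝ) ≤ 1 / (2 * B))
      rw [max_le_iff]
      refine ⟨by positivity, by nlinarith [Real.sqrt_nonneg C, Real.sqrt_nonneg μ]⟩
    calc (1 / (2 * B)) * max 0 (Real.sqrt (A ^ 2 + C * μ) - A - 2) / μ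
        ≤ (1 / (2 * B)) * (A + Real.sqrt C * Real.sqrt μ) / μ := by gcongr
      _ = (1 / (2 * B)) * (A / μ + Real.sqrt C * (Real.sqrt μ / μ)) := by
          field_simp

private lemma fracLemma (A : ℝ) (hA : 0 < A) (y : ℝ → ℝ) (hy0 : ∀ μ, 0 ≤ y μ)
    (hyt : Tendsto y atTop atTop) :
    Tendsto (fun μ => (1 + A) * (1 + y μ) / (1 + A + y μ)) atTop (nhds (1 + A)) := by
  have hdt : Tendsto (fun μ => 1 + A + y μ) atTop atTop :=
    tendsto_atTop_add_const_left _ _ hyt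
  have hfrac : Tendsto (fun μ => A * (1 + A) / (1 + A + y μ)) atTop (nhds 0) :=
    Tendsto.div_atTop tendsto_const_nhds hdt
  have heq : ∀ μ, (1 + A) * (1 + y μ) / (1 + A + y μ) =
      (1 + A) - A * (1 + A) / (1 + A + y μ) := by
    intro μ
    have hd : (0:ℝ) < 1 + A + y μ := by have := hy0 μ; linarith
    field_simp
    ring
  have h := (tendsto_const_nhds :
      Tendsto (fun _ : ℝ => (1 + A)) atTop (nhds (1 + A))).sub hfrac
  rw [sub_zero] at h
  exact h.congr (fun μ => (heq μ).symm)

/-- properties of l(μ): continuity on (0,∞), positivity for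
μ ≤ min_k ln2·(1+a_k)/(a_k b_k), negative limit at ∞, and existence of a root
μ* beyond the minimum threshold. -/
theorem stmt5 (D : ℕ) (hD : 1 ≤ D) (a b : Fin D → ℝ)
    (ha : ∀ k, 0 < a k) (hb : ∀ k, 0 < b k) (E : ℝ) (hE : 0 < E)
    (x : Fin D → ℝ → ℝ)
    (hx : ∀ k μ, x k μ =
      (1 / (2 * b k)) * max 0 (Real.sqrt ((a k) ^ 2 + (4 / Real.log 2) * a k * b k * μ) - a k - 2))
    (l : ℝ → ℝ)
    (hl : ∀ μ, l μ =
      -(1 / 2) * ∑ k, Real.logb 2 ((1 + a k) * (1 + b k * x k μ) / (1 + a k + b k * x k μ))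
      + (1 / μ) * (E + (1 / 2) * ∑ k, x k μ)) :
    ContinuousOn l (Set.Ioi 0) ∧
    (∀ μ, 0 < μ →
      μ ≤ (Finset.univ.inf' ⟨⟨0, hD⟩, Finset.mem_univ _⟩
            fun k => Real.log 2 * (1 + a k) / (a k * b k)) → 0 < l μ) ∧
    Tendsto l atTop (nhds (-(1 / 2) * ∑ k, Real.logb 2 (1 + a k))) ∧
    (-(1 / 2) * ∑ k, Real.logb 2 (1 + a k) < 0) ∧
    (∃ μs, (Finset.univ.inf' ⟨⟨0, hD⟩, Finset.mem_univ _⟩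
            fun k => Real.log 2 * (1 + a k) / (a k * b k)) < μs ∧ l μs = 0) := by
  have hlog2 : (0 : ℝ) < Real.log 2 := Real.log_pos one_lt_two
  -- basic positivity facts
  have hx0 : ∀ k μ, 0 ≤ x k μ := by
    intro k μ
    rw [hx]
    have hbk := hb k
    exact mul_nonneg (by positivity) (le_max_left _ _)
  have hden : ∀ k μ, 0 < 1 + a k + b k * x k μ := by
    intro k μ
    have h1 := mul_nonneg (hb k).le (hx0 k μ)
    have := ha k
    linarith
  have harg : ∀ k μ, 0 < (1 + a k) * (1 + b k * x k μ) / (1 + a k + b k * x k μ) := by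
    intro k μ
    have h1 := mul_nonneg (hb k).le (hx0 k μ)
    have := ha k
    exact div_pos (by nlinarith) (hden k μ)
  -- continuity of x
  have hxcont : ∀ k, Continuous (x k) := by
    intro k
    have hxe : x k = fun μ => (1 / (2 * b k)) *
        max 0 (Real.sqrt ((a k) ^ 2 + (4 / Real.log 2) * a k * b k * μ) - a k - 2) :=
      funext (hx k)
    rw [hxe]
    exact continuous_const.mul (continuous_const.max
      (((Real.continuous_sqrt.comp (by continuity)).sub continuous_const).sub continuous_const))
  -- continuity of the logb summands
  have hgc : ∀ k, Continuous (fun μ =>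
      Real.logb 2 ((1 + a k) * (1 + b k * x k μ) / (1 + a k + b k * x k μ))) := by
    intro k
    have hf : Continuous (fun μ => (1 + a k) * (1 + b k * x k μ) / (1 + a k + b k * x k μ)) :=
      Continuous.div (continuous_const.mul (continuous_const.add
        (continuous_const.mul (hxcont k))))
        (continuous_const.add (continuous_const.mul (hxcont k)))
        (fun μ => (hden k μ).ne')
    simp only [Real.logb]
    exact (hf.log (fun μ => (harg k μ).ne')).div_const _
  -- continuity of l on Ioi 0
  have hcont : ContinuousOn l (Set.Ioi 0) := by
    apply ContinuousOn.congr (f := fun μ =>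
      -(1 / 2) * ∑ k, Real.logb 2 ((1 + a k) * (1 + b k * x k μ) / (1 + a k + b k * x k μ))
      + (1 / μ) * (E + (1 / 2) * ∑ k, x k μ)) ?_ (fun μ _ => hl μ)
    apply ContinuousOn.add
    · exact (continuous_const.mul
        (continuous_finset_sum _ (fun k _ => hgc k))).continuousOn
    · exact ContinuousOn.mul
        (ContinuousOn.div continuousOn_const continuousOn_id
          (fun μ hμ => ne_of_gt hμ))
        (continuous_const.add (continuous_const.mul
          (continuous_finset_sum _ (fun k _ => hxcont k)))).continuousOn
  set m : ℝ := Finset.univ.inf' ⟨⟨0, hD⟩, Finset.mem_univ _⟩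
      (fun k => Real.log 2 * (1 + a k) / (a k * b k)) with hm
  have hmpos : 0 < m := by
    rw [hm]; refine (Finset.lt_inf'_iff _).2 ?_
    intro k _
    exact div_pos (mul_pos hlog2 (by linarith [ha k])) (mul_pos (ha k) (hb k))
  -- positivity of l for small μ
  have hpos : ∀ μ, 0 < μ → μ ≤ m → 0 < l μ := by
    intro μ hμ hμm
    have hxz : ∀ k, x k μ = 0 := by
      intro k
      have hk : μ ≤ Real.log 2 * (1 + a k) / (a k * b k) :=
        le_trans hμm (Finset.inf'_le _ (Finset.mem_univ k))
      have hab : 0 < a k * b k := mul_pos (ha k) (hb k)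
      have h1 : a k * b k * μ ≤ Real.log 2 * (1 + a k) := by
        rw [le_div_iff₀ hab] at hk
        linarith
      have h2 : (4 / Real.log 2) * a k * b k * μ ≤ 4 * (1 + a k) := by
        have h3 : (4 / Real.log 2) * a k * b k * μ = (4 / Real.log 2) * (a k * b k * μ) := by
          ring
        rw [h3]
        have h4 : (4 / Real.log 2) * (a k * b k * μ) ≤
            (4 / Real.log 2) * (Real.log 2 * (1 + a k)) :=
          mul_le_mul_of_nonneg_left h1 (by positivity)
        have h5 : (4 / Real.log 2) * (Real.log 2 * (1 + a k)) = 4 * (1 + a k) := by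
          field_simp
        linarith
      have hsq : (a k) ^ 2 + (4 / Real.log 2) * a k * b k * μ ≤ (a k + 2) ^ 2 := by
        nlinarith
      have hs : Real.sqrt ((a k) ^ 2 + (4 / Real.log 2) * a k * b k * μ) ≤ a k + 2 := by
        have h6 := Real.sqrt_le_sqrt hsq
        rwa [Real.sqrt_sq (by linarith [ha k])] at h6
      rw [hx]
      have h7 : Real.sqrt ((a k) ^ 2 + (4 / Real.log 2) * a k * b k * μ) - a k - 2 ≤ 0 := by
        linarith
      rw [max_eq_left h7, mul_zero]
    rw [hl]
    have h1 : ∀ k : Fin D, Real.logb 2 ((1 + a k) * (1 + b k * x k μ) /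
        (1 + a k + b k * x k μ)) = 0 := by
      intro k
      rw [hxz k]
      have hak : (0:ℝ) < 1 + a k := by linarith [ha k]
      have : (1 + a k) * (1 + b k * 0) / (1 + a k + b k * 0) = 1 := by
        simp [hak.ne']
      rw [this, Real.logb_one]
    rw [Finset.sum_congr rfl (fun k _ => h1 k), Finset.sum_congr rfl (fun k _ => hxz k)]
    simp only [Finset.sum_const_zero, mul_zero, neg_mul, zero_mul, neg_zero, add_zero, zero_add]
    positivity
  -- x k tends to atTop
  have hxt : ∀ k, Tendsto (x k) atTop atTop := by
    intro k
    have hc : 0 < (4 / Real.log 2) * a k * b k :=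
      mul_pos (mul_pos (div_pos (by norm_num) hlog2) (ha k)) (hb k)
    exact (xtLemma (a k) (b k) _ (hb k) hc).congr (fun μ => (hx k μ).symm)
  -- each logb summand converges
  have hgt : ∀ k, Tendsto (fun μ =>
      Real.logb 2 ((1 + a k) * (1 + b k * x k μ) / (1 + a k + b k * x k μ)))
      atTop (nhds (Real.logb 2 (1 + a k))) := by
    intro k
    have hak : (0:ℝ) < 1 + a k := by linarith [ha k]
    have hft := fracLemma (a k) (ha k) (fun μ => b k * x k μ)
      (fun μ => mul_nonneg (hb k).le (hx0 k μ))
      (Tendsto.const_mul_atTop (hb k) (hxt k))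
    exact ((Real.continuousAt_logb hak.ne').tendsto).comp hft
  -- each x k μ / μ tends to 0
  have hxdiv : ∀ k, Tendsto (fun μ => x k μ / μ) atTop (nhds 0) := by
    intro k
    have hc : 0 < (4 / Real.log 2) * a k * b k :=
      mul_pos (mul_pos (div_pos (by norm_num) hlog2) (ha k)) (hb k)
    exact (xdivLemma (a k) (b k) _ (ha k) (hb k) hc).congr (fun μ => by rw [hx k μ])
  -- the (1/μ)(E + (1/2)Σ x) term tends to 0
  have hterm2 : Tendsto (fun μ => (1 / μ) * (E + (1 / 2) * ∑ k, x k μ)) atTop (nhds 0) := by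
    have hEdiv : Tendsto (fun μ : ℝ => E / μ) atTop (nhds 0) :=
      Tendsto.div_atTop tendsto_const_nhds tendsto_id
    have hsum : Tendsto (fun μ => ∑ k, x k μ / μ) atTop (nhds 0) := by
      have := tendsto_finset_sum Finset.univ (fun k _ => hxdiv k)
      simpa using this
    have h := hEdiv.add (hsum.const_mul (1 / 2 : ℝ))
    rw [mul_zero, add_zero] at h
    apply h.congr'
    filter_upwards [eventually_gt_atTop (0:ℝ)] with μ hμ
    rw [← Finset.sum_div]
    field_simp
  -- the limit of l at atTop
  set L : ℝ := -(1 / 2) * ∑ k, Real.logb 2 (1 + a k) with hL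
  have hlt : Tendsto l atTop (nhds L) := by
    have h1 : Tendsto (fun μ => -(1 / 2 : ℝ) * ∑ k,
        Real.logb 2 ((1 + a k) * (1 + b k * x k μ) / (1 + a k + b k * x k μ)))
        atTop (nhds L) :=
      (tendsto_finset_sum Finset.univ (fun k _ => hgt k)).const_mul (-(1/2 : ℝ))
    have h2 := h1.add hterm2
    rw [add_zero] at h2
    exact h2.congr (fun μ => (hl μ).symm)
  have hLneg : L < 0 := by
    have hsum : 0 < ∑ k, Real.logb 2 (1 + a k) := by
      apply Finset.sum_pos
      · intro k _
        exact Real.logb_pos one_lt_two (by linarith [ha k])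
      · exact ⟨⟨0, hD⟩, Finset.mem_univ _⟩
    rw [hL]
    nlinarith
  refine ⟨hcont, hpos, hlt, hLneg, ?_⟩
  -- existence of the root
  have hev : ∀ᶠ μ in atTop, l μ < 0 := hlt.eventually_lt_const hLneg
  obtain ⟨μ1, hμ1, hμ1m⟩ := (hev.and (eventually_ge_atTop (m + 1))).exists
  have hmμ1 : m ≤ μ1 := by linarith
  have hsub : Set.Icc m μ1 ⊆ Set.Ioi 0 := fun t ht => lt_of_lt_of_le hmpos ht.1
  have hivt := intermediate_value_Icc' hmμ1 (hcont.mono hsub)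
  have h0mem : (0 : ℝ) ∈ Set.Icc (l μ1) (l m) := ⟨hμ1.le, (hpos m hmpos le_rfl).le⟩
  obtain ⟨c, hc, hlc⟩ := hivt h0mem
  refine ⟨c, ?_, hlc⟩
  rcases eq_or_lt_of_le hc.1 with h | h
  · exact absurd (h ▸ hlc) (hpos m hmpos le_rfl).ne'
  · exact h
end

section
/- The function l(μ) defined as in the previous context is strictly decreasing on [max_k ln 2·(1+a_k)/(a_k b_k), ∞), hence its root μ* in that region (when x_k(μ*) > 0 for some k) is unique there. -/
lemma alg_aux (L A s μ c : ℝ) (hL : 0 < L) (hA : 0 < A) (hs : 0 < s) (hAs : A < s)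
    (hμ : 0 < μ) (hc : c * μ = s ^ 2 - A ^ 2) :
    ((1 + A) * (c / (2 * s)) * (s + A) - (1 + A) * (s - A) * (c / (2 * s))) / (s + A) ^ 2 /
        ((1 + A) * (s - A) / (s + A)) / L = A / (L * s * μ) := by
  have h1 : s - A ≠ 0 := by linarith
  have h2 : s + A ≠ 0 := by positivity
  have h3 : (1:ℝ) + A ≠ 0 := by positivity
  have hcv : c = (s ^ 2 - A ^ 2) / μ := by field_simp [hμ.ne'] at hc ⊢; linarith
  subst hcv
  field_simp
  ring

lemma sqrt_deriv_aux (A B : ℝ) (hA : 0 < A) (hB : 0 < B) {μ : ℝ} (hμ : 0 < μ) :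
    HasDerivAt (fun t : ℝ => Real.sqrt (A ^ 2 + 4 / Real.log 2 * A * B * t))
      (4 / Real.log 2 * A * B / (2 * Real.sqrt (A ^ 2 + 4 / Real.log 2 * A * B * μ))) μ := by
  have hln : 0 < Real.log 2 := Real.log_pos (by norm_num)
  have harg : 0 < A ^ 2 + 4 / Real.log 2 * A * B * μ := by positivity
  have h : HasDerivAt (fun t : ℝ => A ^ 2 + 4 / Real.log 2 * A * B * t)
      (4 / Real.log 2 * A * B) μ := by
    simpa using ((hasDerivAt_id μ).const_mul (4 / Real.log 2 * A * B)).const_add (A ^ 2)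
  simpa using h.sqrt harg.ne'

lemma X_deriv (A B : ℝ) (hA : 0 < A) (hB : 0 < B) {μ : ℝ} (hμ : 0 < μ) :
    HasDerivAt (fun t : ℝ => (Real.sqrt (A ^ 2 + 4 / Real.log 2 * A * B * t) - A - 2) / (2 * B))
      (A / (Real.log 2 * Real.sqrt (A ^ 2 + 4 / Real.log 2 * A * B * μ))) μ := by
  have hln : 0 < Real.log 2 := Real.log_pos (by norm_num)
  have harg : 0 < A ^ 2 + 4 / Real.log 2 * A * B * μ := by positivity
  have hs : 0 < Real.sqrt (A ^ 2 + 4 / Real.log 2 * A * B * μ) := Real.sqrt_pos.mpr harg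
  have h := (((sqrt_deriv_aux A B hA hB hμ).sub_const A).sub_const 2).div_const (2 * B)
  refine h.congr_deriv ?_
  field_simp
  ring

lemma logterm_deriv (A B : ℝ) (hA : 0 < A) (hB : 0 < B) {μ : ℝ} (hμ : 0 < μ) :
    HasDerivAt (fun t : ℝ =>
        Real.logb 2 ((1 + A) * (Real.sqrt (A ^ 2 + 4 / Real.log 2 * A * B * t) - A) /
          (Real.sqrt (A ^ 2 + 4 / Real.log 2 * A * B * t) + A)))
      (A / (Real.log 2 * Real.sqrt (A ^ 2 + 4 / Real.log 2 * A * B * μ) * μ)) μ := by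
  have hln : 0 < Real.log 2 := Real.log_pos (by norm_num)
  have harg : 0 < A ^ 2 + 4 / Real.log 2 * A * B * μ := by positivity
  have hs : 0 < Real.sqrt (A ^ 2 + 4 / Real.log 2 * A * B * μ) := Real.sqrt_pos.mpr harg
  have hs2 : Real.sqrt (A ^ 2 + 4 / Real.log 2 * A * B * μ) ^ 2
      = A ^ 2 + 4 / Real.log 2 * A * B * μ := Real.sq_sqrt harg.le
  have hAs : A < Real.sqrt (A ^ 2 + 4 / Real.log 2 * A * B * μ) := by
    have h0 : 0 < 4 / Real.log 2 * A * B * μ := by positivity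
    calc A = Real.sqrt (A ^ 2) := (Real.sqrt_sq hA.le).symm
      _ < _ := Real.sqrt_lt_sqrt (sq_nonneg A) (by linarith)
  set s := Real.sqrt (A ^ 2 + 4 / Real.log 2 * A * B * μ) with hsdef
  have hnum : HasDerivAt (fun t : ℝ =>
      (1 + A) * (Real.sqrt (A ^ 2 + 4 / Real.log 2 * A * B * t) - A))
      ((1 + A) * (4 / Real.log 2 * A * B / (2 * s))) μ :=
    ((sqrt_deriv_aux A B hA hB hμ).sub_const A).const_mul (1 + A)
  have hden : HasDerivAt (fun t : ℝ =>
      Real.sqrt (A ^ 2 + 4 / Real.log 2 * A * B * t) + A)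
      (4 / Real.log 2 * A * B / (2 * s)) μ :=
    (sqrt_deriv_aux A B hA hB hμ).add_const A
  have hdne : s + A ≠ 0 := by positivity
  have hf := hnum.fun_div hden hdne
  have hfne : (1 + A) * (s - A) / (s + A) ≠ 0 := by
    apply div_ne_zero _ hdne
    have : 0 < (1 + A) * (s - A) := by nlinarith
    exact this.ne'
  have hlog := (hf.log hfne).div_const (Real.log 2)
  have heq : (fun t : ℝ =>
        Real.logb 2 ((1 + A) * (Real.sqrt (A ^ 2 + 4 / Real.log 2 * A * B * t) - A) /
          (Real.sqrt (A ^ 2 + 4 / Real.log 2 * A * B * t) + A))) =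
      fun t : ℝ => Real.log ((1 + A) * (Real.sqrt (A ^ 2 + 4 / Real.log 2 * A * B * t) - A) /
          (Real.sqrt (A ^ 2 + 4 / Real.log 2 * A * B * t) + A)) / Real.log 2 := by
    funext t; rw [Real.logb]
  rw [heq]
  refine hlog.congr_deriv ?_
  rw [← hsdef]
  exact (alg_aux (Real.log 2) A s μ (4 / Real.log 2 * A * B) hln hA hs hAs hμ
    (by linarith))
lemma s_ge_aux (A B : ℝ) (hA : 0 < A) (hB : 0 < B) {μ : ℝ}
    (hμ : Real.log 2 * (1 + A) / (A * B) ≤ μ) :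
    A + 2 ≤ Real.sqrt (A ^ 2 + 4 / Real.log 2 * A * B * μ) := by
  have hln : 0 < Real.log 2 := Real.log_pos (by norm_num)
  have key : 4 / Real.log 2 * A * B * (Real.log 2 * (1 + A) / (A * B)) = 4 * (1 + A) := by
    field_simp
  have h2 := mul_le_mul_of_nonneg_left hμ (show (0:ℝ) ≤ 4 / Real.log 2 * A * B by positivity)
  rw [key] at h2
  calc A + 2 = Real.sqrt ((A + 2) ^ 2) := (Real.sqrt_sq (by positivity)).symm
    _ ≤ _ := Real.sqrt_le_sqrt (by nlinarith)

lemma Lderiv (D : ℕ) (a b : Fin D → ℝ) (ha : ∀ k, 0 < a k) (hb : ∀ k, 0 < b k)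
    (E : ℝ) {μ : ℝ} (hμ0 : 0 < μ) :
    HasDerivAt (fun t : ℝ =>
      -(1 / 2) * ∑ k, Real.logb 2 ((1 + a k) *
          (Real.sqrt ((a k) ^ 2 + 4 / Real.log 2 * a k * b k * t) - a k) /
          (Real.sqrt ((a k) ^ 2 + 4 / Real.log 2 * a k * b k * t) + a k))
        + (1 / t) * (E + (1 / 2) * ∑ k,
          (Real.sqrt ((a k) ^ 2 + 4 / Real.log 2 * a k * b k * t) - a k - 2) / (2 * b k)))
      (-((E + (1 / 2) * ∑ k,
          (Real.sqrt ((a k) ^ 2 + 4 / Real.log 2 * a k * b k * μ) - a k - 2) / (2 * b k)) / μ ^ 2))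
      μ := by
  have hln : 0 < Real.log 2 := Real.log_pos (by norm_num)
  have h1 : HasDerivAt (fun t : ℝ =>
      -(1 / 2) * ∑ k, Real.logb 2 ((1 + a k) *
          (Real.sqrt ((a k) ^ 2 + 4 / Real.log 2 * a k * b k * t) - a k) /
          (Real.sqrt ((a k) ^ 2 + 4 / Real.log 2 * a k * b k * t) + a k)))
      (-(1 / 2) * ∑ k, a k / (Real.log 2 *
          Real.sqrt ((a k) ^ 2 + 4 / Real.log 2 * a k * b k * μ) * μ)) μ :=
    (HasDerivAt.fun_sum fun k _ => logterm_deriv (a k) (b k) (ha k) (hb k) hμ0).const_mul (-(1/2))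
  have h2 : HasDerivAt (fun t : ℝ => E + (1 / 2) * ∑ k,
      (Real.sqrt ((a k) ^ 2 + 4 / Real.log 2 * a k * b k * t) - a k - 2) / (2 * b k))
      ((1 / 2) * ∑ k, a k / (Real.log 2 *
          Real.sqrt ((a k) ^ 2 + 4 / Real.log 2 * a k * b k * μ))) μ :=
    ((HasDerivAt.fun_sum fun k _ => X_deriv (a k) (b k) (ha k) (hb k) hμ0).const_mul
      (1 / 2)).const_add E
  have h3 : HasDerivAt (fun t : ℝ => 1 / t) (-(1 / μ ^ 2)) μ := by
    simpa [one_div] using hasDerivAt_inv hμ0.ne'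
  have hLd := h1.add (h3.mul h2)
  have hT : ∑ k, a k / (Real.log 2 * Real.sqrt ((a k) ^ 2 + 4 / Real.log 2 * a k * b k * μ) * μ)
      = (∑ k, a k / (Real.log 2 * Real.sqrt ((a k) ^ 2 + 4 / Real.log 2 * a k * b k * μ))) / μ := by
    rw [Finset.sum_div]
    exact Finset.sum_congr rfl fun k _ => (div_div _ _ _).symm
  refine hLd.congr_deriv ?_
  rw [hT]
  generalize (∑ k, a k / (Real.log 2 * Real.sqrt ((a k) ^ 2 + 4 / Real.log 2 * a k * b k * μ))) = S1
  generalize (∑ k, (Real.sqrt ((a k) ^ 2 + 4 / Real.log 2 * a k * b k * μ) - a k - 2) / (2 * b k)) = S2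
  field_simp
  ring

/-- l(μ) is strictly decreasing on [max_k ln2·(1+a_k)/(a_k b_k), ∞),
hence its root there is unique. -/
theorem stmt6 (D : ℕ) (hD : 1 ≤ D) (a b : Fin D → ℝ)
    (ha : ∀ k, 0 < a k) (hb : ∀ k, 0 < b k) (E : ℝ) (hE : 0 < E)
    (x : Fin D → ℝ → ℝ)
    (hx : ∀ k μ, x k μ =
      (1 / (2 * b k)) * max 0 (Real.sqrt ((a k) ^ 2 + (4 / Real.log 2) * a k * b k * μ) - a k - 2))
    (l : ℝ → ℝ)
    (hl : ∀ μ, l μ =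
      -(1 / 2) * ∑ k, Real.logb 2 ((1 + a k) * (1 + b k * x k μ) / (1 + a k + b k * x k μ))
      + (1 / μ) * (E + (1 / 2) * ∑ k, x k μ)) :
    StrictAntiOn l
      (Set.Ici (Finset.univ.sup' ⟨⟨0, hD⟩, Finset.mem_univ _⟩
        fun k => Real.log 2 * (1 + a k) / (a k * b k))) ∧
    (∀ μ₁ ∈ Set.Ici (Finset.univ.sup' ⟨⟨0, hD⟩, Finset.mem_univ _⟩
        fun k => Real.log 2 * (1 + a k) / (a k * b k)),
     ∀ μ₂ ∈ Set.Ici (Finset.univ.sup' ⟨⟨0, hD⟩, Finset.mem_univ _⟩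
        fun k => Real.log 2 * (1 + a k) / (a k * b k)),
      l μ₁ = 0 → l μ₂ = 0 → μ₁ = μ₂) := by
  have hln : 0 < Real.log 2 := Real.log_pos (by norm_num)
  set M := Finset.univ.sup' ⟨⟨0, hD⟩, Finset.mem_univ _⟩
      (fun k => Real.log 2 * (1 + a k) / (a k * b k)) with hMdef
  have hM0 : 0 < M := by
    refine lt_of_lt_of_le ?_ (Finset.le_sup' (fun k => Real.log 2 * (1 + a k) / (a k * b k)) (Finset.mem_univ ⟨0, hD⟩))
    show 0 < Real.log 2 * (1 + a ⟨0, hD⟩) / (a ⟨0, hD⟩ * b ⟨0, hD⟩)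
    have h1 := ha ⟨0, hD⟩
    have h2 := hb ⟨0, hD⟩
    positivity
  have hMk : ∀ k, Real.log 2 * (1 + a k) / (a k * b k) ≤ M := by
    intro k
    rw [hMdef]
    exact Finset.le_sup' (fun k => Real.log 2 * (1 + a k) / (a k * b k)) (Finset.mem_univ k)
  have hSge : ∀ k t, M ≤ t →
      a k + 2 ≤ Real.sqrt ((a k) ^ 2 + 4 / Real.log 2 * a k * b k * t) := fun k t ht =>
    s_ge_aux (a k) (b k) (ha k) (hb k) ((hMk k).trans ht)
  -- l = L on Ici M
  have hlL : ∀ t, M ≤ t → l t =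
      -(1 / 2) * ∑ k, Real.logb 2 ((1 + a k) *
          (Real.sqrt ((a k) ^ 2 + 4 / Real.log 2 * a k * b k * t) - a k) /
          (Real.sqrt ((a k) ^ 2 + 4 / Real.log 2 * a k * b k * t) + a k))
        + (1 / t) * (E + (1 / 2) * ∑ k,
          (Real.sqrt ((a k) ^ 2 + 4 / Real.log 2 * a k * b k * t) - a k - 2) / (2 * b k)) := by
    intro t ht
    have hxk : ∀ k, x k t =
        (Real.sqrt ((a k) ^ 2 + 4 / Real.log 2 * a k * b k * t) - a k - 2) / (2 * b k) := by
      intro k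
      rw [hx, max_eq_right (by have := hSge k t ht; linarith), one_div_mul_eq_div]
    rw [hl]
    have hsum : ∑ k, x k t = ∑ k,
        (Real.sqrt ((a k) ^ 2 + 4 / Real.log 2 * a k * b k * t) - a k - 2) / (2 * b k) :=
      Finset.sum_congr rfl fun k _ => hxk k
    rw [hsum]
    congr 1
    congr 1
    apply Finset.sum_congr rfl
    intro k _
    rw [hxk k]
    have hb' : (b k : ℝ) ≠ 0 := (hb k).ne'
    set s := Real.sqrt ((a k) ^ 2 + 4 / Real.log 2 * a k * b k * t) with hsd
    have hBx : b k * ((s - a k - 2) / (2 * b k)) = (s - a k - 2) / 2 := by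
      field_simp
    rw [hBx]
    congr 1
    have hge := hSge k t ht
    rw [← hsd] at hge
    have hak := ha k
    have h1 : (1 : ℝ) + a k + (s - a k - 2) / 2 ≠ 0 := by
      intro h
      rw [show (1:ℝ) + a k + (s - a k - 2) / 2 = (s + a k) / 2 by ring] at h
      have : (0:ℝ) < (s + a k) / 2 := by positivity
      linarith
    have h2 : s + a k ≠ 0 := by positivity
    rw [div_eq_div_iff h1 h2]
    ring
  -- derivative of l on Ioi M
  have hderiv : ∀ μ, M < μ →
      HasDerivAt l (-((E + (1 / 2) * ∑ k,
        (Real.sqrt ((a k) ^ 2 + 4 / Real.log 2 * a k * b k * μ) - a k - 2) / (2 * b k)) / μ ^ 2))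
      μ := by
    intro μ hμ
    have hμ0 : 0 < μ := hM0.trans hμ
    apply (Lderiv D a b ha hb E hμ0).congr_of_eventuallyEq
    exact Filter.eventuallyEq_of_mem (Ioi_mem_nhds hμ) fun t ht => hlL t (le_of_lt ht)
  -- continuity
  have hxc : ∀ k, Continuous (x k) := by
    intro k
    rw [funext (hx k)]
    exact continuous_const.mul (continuous_const.max
      (((Real.continuous_sqrt.comp
        (continuous_const.add (continuous_const.mul continuous_id))).sub
          continuous_const).sub continuous_const))
  have hxnn : ∀ k t, 0 ≤ x k t := by
    intro k t
    rw [hx]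
    have := hb k
    exact mul_nonneg (by positivity) (le_max_left 0 _)
  have hcont : ContinuousOn l (Set.Ici M) := by
    intro μ hμ
    have hμ0 : 0 < μ := lt_of_lt_of_le hM0 hμ
    apply ContinuousAt.continuousWithinAt
    rw [funext hl]
    apply ContinuousAt.add
    · apply ContinuousAt.mul continuousAt_const
      have hterm : ∀ k : Fin D, ContinuousAt
          (fun t => Real.logb 2 ((1 + a k) * (1 + b k * x k t) / (1 + a k + b k * x k t))) μ := by
        intro k
        have hden : (0:ℝ) < 1 + a k + b k * x k μ := by
          have h1 := ha k
          nlinarith [mul_nonneg (hb k).le (hxnn k μ)]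
        have harg : ContinuousAt
            (fun t => (1 + a k) * (1 + b k * x k t) / (1 + a k + b k * x k t)) μ := by
          apply ContinuousAt.div
          · exact (continuous_const.mul (continuous_const.add
              (continuous_const.mul (hxc k)))).continuousAt
          · exact (continuous_const.add (continuous_const.mul (hxc k))).continuousAt
          · exact hden.ne'
        have hpos : (0:ℝ) < (1 + a k) * (1 + b k * x k μ) / (1 + a k + b k * x k μ) := by
          apply div_pos _ hden
          have h1 := ha k
          nlinarith [mul_nonneg (hb k).le (hxnn k μ)]
        exact ContinuousAt.comp (g := Real.logb 2)
          (f := fun t => (1 + a k) * (1 + b k * x k t) / (1 + a k + b k * x k t))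
          (Real.continuousAt_logb hpos.ne') harg
      exact tendsto_finset_sum _ fun k _ => hterm k
    · apply ContinuousAt.mul
      · exact ContinuousAt.div continuousAt_const continuousAt_id hμ0.ne'
      · exact (continuous_const.add (continuous_const.mul
          (continuous_finset_sum _ fun k _ => hxc k))).continuousAt
  -- strict anti
  have hSA : StrictAntiOn l (Set.Ici M) := by
    apply strictAntiOn_of_deriv_neg (convex_Ici M) hcont
    intro μ hμ
    rw [interior_Ici] at hμ
    rw [(hderiv μ hμ).deriv]
    have hμ0 : 0 < μ := hM0.trans hμ
    have hsum : 0 ≤ ∑ k,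
        (Real.sqrt ((a k) ^ 2 + 4 / Real.log 2 * a k * b k * μ) - a k - 2) / (2 * b k) := by
      apply Finset.sum_nonneg
      intro k _
      have h1 := hSge k μ hμ.le
      have h2 := hb k
      apply div_nonneg (by linarith) (by positivity)
    have hpos : 0 < (E + (1 / 2) * ∑ k,
        (Real.sqrt ((a k) ^ 2 + 4 / Real.log 2 * a k * b k * μ) - a k - 2) / (2 * b k)) / μ ^ 2 :=
      div_pos (by linarith) (by positivity)
    linarith
  exact ⟨hSA, fun μ₁ h1 μ₂ h2 e1 e2 => hSA.injOn h1 h2 (e1.trans e2.symm)⟩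
end

section
/- Let q, α, β, d, σ₁², σ₂² > 0 and ε ∈ [0,1). The stationarity equation ((1−ε)/2)·(α/(ln2·σ₁²))·[1/(1+(α/σ₁²)q) − 1/(1+(α/σ₁²)q+(β/σ₂²)d)] = ν₂ with ν₂ = 1/μ₂ > 0 has, whenever it admits a positive solution in q, the solution q = (σ₁²/(2α))·[√((βd/σ₂²)² + 2(1−ε)βdαμ₂/(σ₁²σ₂² ln2)) − βd/σ₂² − 2]. -/
/-- the positive solution of the KKT stationarity equation in the
source power q is given by the closed-form expression. -/
theorem stmt11 (q α β d s1 s2 ε μ2 : ℝ)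
    (hq : 0 < q) (hα : 0 < α) (hβ : 0 < β) (hd : 0 < d)
    (hs1 : 0 < s1) (hs2 : 0 < s2) (hε : ε ∈ Set.Ico (0 : ℝ) 1) (hμ2 : 0 < μ2)
    (hstat : ((1 - ε) / 2) * (α / (Real.log 2 * s1)) *
      (1 / (1 + (α / s1) * q) - 1 / (1 + (α / s1) * q + (β / s2) * d)) = 1 / μ2) :
    q = (s1 / (2 * α)) *
      (Real.sqrt ((β * d / s2) ^ 2 + 2 * (1 - ε) * β * d * α * μ2 / (s1 * s2 * Real.log 2))
        - β * d / s2 - 2) := by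
  have hlog : 0 < Real.log 2 := Real.log_pos (by norm_num)
  have hx : 0 < 1 + (α / s1) * q := by positivity
  have hy : 0 < 1 + (α / s1) * q + (β / s2) * d := by positivity
  have h1 : (2 + 2 * (α / s1) * q + β * d / s2) ^ 2 =
      (β * d / s2) ^ 2 + 2 * (1 - ε) * β * d * α * μ2 / (s1 * s2 * Real.log 2) := by
    have hstat' := hstat
    field_simp at hstat' ⊢
    linear_combination (-2) * s2 * hstat'
  have hpos : 0 ≤ 2 + 2 * (α / s1) * q + β * d / s2 := by positivity
  rw [← h1, Real.sqrt_sq hpos]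
  field_simp
  ring
end
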